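/- Consider a market with finite player set N and item set M, where each valuation v_i : 2^M → ℝ≥0 is monotone, α-submodular (α ≥ 1), and ε-close to a linear valuation ℓ_i. Let 𝓜 be the partition matroid on N×M whose independent sets are those S ⊆ N×M in which each item j ∈ M appears in at most one pair. Let v(S) := Σ_i v_i({j : (i,j) ∈ S}), and let S be a basis of 𝓜 built greedily with respect to v (at each step adding a pair of maximum marginal value among pairs preserving independence). Then the induced allocation (S_i)_{i∈N} with S_i = {j : (i,j) ∈ S} satisfies Σ_i v_i(S_i) ≥ ((1−3ε)/α)·OPT, where OPT is the maximum of Σ_i v_i(T_i) over all allocations (T_i) (families of pairwise disjoint subsets of M). -/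

import Mathlib

/-- `playerSlice i S = {j : (i,j) ∈ S}`, the items paired with player `i` in `S`. -/
def playerSlice {N M : Type*} [DecidableEq N] [DecidableEq M]
    (i : N) (S : Finset (N × M)) : Finset M :=
  (S.filter (fun p => p.1 = i)).image Prod.snd

/-- Independence in the partition matroid on `N × M`: each item `j ∈ M` appears
in at most one pair. -/
def PartitionIndep {N M : Type*} [DecidableEq N] [DecidableEq M]
    (S : Finset (N × M)) : Prop :=
  ∀ j : M, (S.filter (fun p => p.2 = j)).card ≤ 1

/-- The prefix `{s_1, …, s_{j-1}}` of a finite sequence `s : Fin k → N × M`. -/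
def prefixSet {G : Type*} [DecidableEq G] {k : ℕ} (s : Fin k → G) (j : Fin k) :
    Finset G :=
  (Finset.univ.filter (fun i : Fin k => i < j)).image s

section AuxLemmas
variable {N M : Type*} [DecidableEq N] [DecidableEq M]

lemma mem_playerSlice {i : N} {j : M} {A : Finset (N × M)} :
    j ∈ playerSlice i A ↔ (i, j) ∈ A := by
  constructor
  · intro h
    obtain ⟨p, hp, hp2⟩ := Finset.mem_image.mp h
    obtain ⟨hpA, hp1⟩ := Finset.mem_filter.mp hp
    have hpij : p = (i, j) := by
      cases p with
      | mk a b => simp_all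
    rwa [hpij] at hpA
  · intro h
    exact Finset.mem_image.mpr ⟨(i, j), Finset.mem_filter.mpr ⟨h, rfl⟩, rfl⟩

lemma playerSlice_insert_self (g : N) (j : M) (A : Finset (N × M)) :
    playerSlice g (insert (g, j) A) = insert j (playerSlice g A) := by
  ext x
  simp only [mem_playerSlice, Finset.mem_insert, Prod.mk.injEq, mem_playerSlice]
  tauto

lemma playerSlice_insert_ne {i g : N} (h : i ≠ g) (j : M) (A : Finset (N × M)) :
    playerSlice i (insert (g, j) A) = playerSlice i A := by
  ext x
  simp only [mem_playerSlice, Finset.mem_insert, Prod.mk.injEq]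
  tauto

lemma playerSlice_mono {i : N} {A B : Finset (N × M)} (h : A ⊆ B) :
    playerSlice i A ⊆ playerSlice i B := by
  intro x hx
  exact mem_playerSlice.mpr (h (mem_playerSlice.mp hx))

lemma playerSlice_empty (i : N) : playerSlice i (∅ : Finset (N × M)) = ∅ := by
  ext x; simp [mem_playerSlice]

lemma partitionIndep_subset {A B : Finset (N × M)} (h : A ⊆ B)
    (hB : PartitionIndep B) : PartitionIndep A := fun j =>
  le_trans (Finset.card_le_card (Finset.filter_subset_filter _ h)) (hB j)

lemma partitionIndep_insert {A : Finset (N × M)} (hA : PartitionIndep A)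
    (i : N) (j : M) (hfresh : ∀ p ∈ A, p.2 ≠ j) :
    PartitionIndep (insert (i, j) A) := by
  intro j'
  rw [Finset.filter_insert]
  split_ifs with h
  · have he : A.filter (fun p => p.2 = j') = ∅ := by
      apply Finset.filter_eq_empty_iff.mpr
      intro p hp
      rw [← h]
      exact hfresh p hp
    rw [he]
    simp
  · exact hA j'

end AuxLemmas
/-- Corollary: greedy welfare guarantee.  In a market where
each valuation `v_i` is monotone, `α`-submodular (`α ≥ 1`) and `ε`-close to a
linear valuation `ℓ_i`, let `S ⊆ N × M` be a basis of the partition matroid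
built greedily with respect to `V(S) = Σ_i v_i({j : (i,j) ∈ S})`.  Then the
induced allocation `(S_i)` satisfies `Σ_i v_i(S_i) ≥ ((1−3ε)/α)·OPT`, i.e. its
welfare is at least `((1−3ε)/α)` times the welfare of any allocation. -/
theorem greedy_allocation_welfare
    {N M : Type*} [Fintype N] [Fintype M] [DecidableEq N] [DecidableEq M]
    (α ε : ℝ) (hα : 1 ≤ α) (hε : 0 ≤ ε)
    (v : N → Finset M → ℝ)
    (hv : ∀ (i : N) (S : Finset M), 0 ≤ v i S)
    (hmono : ∀ (i : N) (S T : Finset M), S ⊆ T → v i S ≤ v i T)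
    (hsub : ∀ (i : N) (S T : Finset M), S ⊆ T → ∀ j : M, j ∉ T →
      α * (v i (insert j S) - v i S) ≥ v i (insert j T) - v i T)
    (c : N → ℝ) (hc : ∀ i, 0 ≤ c i)
    (l : N → M → ℝ) (hl : ∀ i j, 0 ≤ l i j)
    (ℓ : N → Finset M → ℝ)
    (hℓ : ∀ (i : N) (S : Finset M), ℓ i S = c i + ∑ j ∈ S, l i j)
    (hclose : ∀ (i : N) (S : Finset M), ℓ i S ≤ v i S ∧ v i S ≤ (1 + ε) * ℓ i S)
    (V : Finset (N × M) → ℝ)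
    (hV : ∀ S : Finset (N × M), V S = ∑ i : N, v i (playerSlice i S))
    -- the greedily built basis S = {s_1, …, s_k} of the partition matroid
    (k : ℕ) (s : Fin k → N × M) (hsinj : Function.Injective s)
    (S : Finset (N × M)) (hS : S = Finset.univ.image s)
    (hgIndep : ∀ j : Fin k, PartitionIndep (insert (s j) (prefixSet s j)))
    (hgMax : ∀ j : Fin k, ∀ q : N × M, q ∉ prefixSet s j →
      PartitionIndep (insert q (prefixSet s j)) →
      V (insert (s j) (prefixSet s j)) - V (prefixSet s j) ≥
        V (insert q (prefixSet s j)) - V (prefixSet s j))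
    (hSmax : ∀ q : N × M, q ∉ S → ¬ PartitionIndep (insert q S)) :
    -- the induced allocation is ((1-3ε)/α)-approximately optimal
    ∀ T : N → Finset M, (∀ i i' : N, i ≠ i' → Disjoint (T i) (T i')) →
      ∑ i : N, v i (playerSlice i S) ≥ ((1 - 3 * ε) / α) * ∑ i : N, v i (T i) := by
  intro T hT
  classical
  rcases isEmpty_or_nonempty N with hNe | hN
  · simp [Finset.univ_eq_empty]
  obtain ⟨i₀⟩ := hN
  -- prefix sets, indexed by natural-number time
  set P : ℕ → Finset (N × M) :=
    fun n => (Finset.univ.filter (fun t : Fin k => (t : ℕ) < n)).image s with hPdef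
  have hPeq : ∀ t : Fin k, prefixSet s t = P (t : ℕ) := by
    intro t
    have hfe : (Finset.univ.filter (fun u : Fin k => u < t))
        = (Finset.univ.filter (fun u : Fin k => (u : ℕ) < (t : ℕ))) := by
      ext u
      simp only [Finset.mem_filter, Finset.mem_univ, true_and, Fin.lt_def]
    unfold prefixSet
    simp only [hPdef]
    rw [hfe]
  have hP0 : P 0 = ∅ := by simp [hPdef]
  have hPsub : ∀ n, P n ⊆ S := by
    intro n
    rw [hS]
    simp only [hPdef]
    exact Finset.image_subset_image (Finset.filter_subset _ _)
  have hPk : ∀ n, k ≤ n → P n = S := by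
    intro n hn
    rw [hS]
    simp only [hPdef]
    congr 1
    ext t
    simp only [Finset.mem_filter, Finset.mem_univ, true_and, iff_true]
    exact lt_of_lt_of_le t.isLt hn
  have hPsucc : ∀ (n : ℕ) (hn : n < k), P (n + 1) = insert (s ⟨n, hn⟩) (P n) := by
    intro n hn
    simp only [hPdef]
    ext q
    simp only [Finset.mem_image, Finset.mem_filter, Finset.mem_univ, true_and,
      Finset.mem_insert]
    constructor
    · rintro ⟨t, ht, rfl⟩
      rcases Nat.lt_succ_iff_lt_or_eq.mp ht with h | h
      · exact Or.inr ⟨t, h, rfl⟩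
      · left; congr 1; exact Fin.ext h
    · rintro (h | ⟨t, ht, rfl⟩)
      · exact ⟨⟨n, hn⟩, Nat.lt_succ_self n, h.symm⟩
      · exact ⟨t, Nat.lt_succ_of_lt ht, rfl⟩
  -- marginal formula
  have hmarg : ∀ (A : Finset (N × M)) (q : N × M),
      V (insert q A) = V A +
        (v q.1 (insert q.2 (playerSlice q.1 A)) - v q.1 (playerSlice q.1 A)) := by
    intro A q
    obtain ⟨g, j⟩ := q
    rw [hV, hV]
    have hterm : ∀ i : N, v i (playerSlice i (insert (g, j) A)) =
        v i (playerSlice i A) +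
          (if i = g then v g (insert j (playerSlice g A)) - v g (playerSlice g A) else 0) := by
      intro i
      by_cases h : i = g
      · subst h; rw [playerSlice_insert_self]; simp
      · rw [playerSlice_insert_ne h]; simp [h]
    rw [Finset.sum_congr rfl (fun i _ => hterm i), Finset.sum_add_distrib]
    congr 1
    rw [Finset.sum_ite_eq' Finset.univ g
      (fun _ => v g (insert j (playerSlice g A)) - v g (playerSlice g A))]
    simp
  -- the marginal gains
  set δ : Fin k → ℝ :=
    fun t => V (insert (s t) (P (t : ℕ))) - V (P (t : ℕ)) with hδdef
  have hIndepP : ∀ t : Fin k, PartitionIndep (insert (s t) (P (t : ℕ))) := by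
    intro t
    rw [← hPeq t]
    exact hgIndep t
  have hfresh : ∀ t : Fin k, ∀ p ∈ P (t : ℕ), p.2 ≠ (s t).2 := by
    intro t p hp hpe
    obtain ⟨u, hu, hup⟩ : ∃ u : Fin k, (u : ℕ) < (t : ℕ) ∧ s u = p := by
      have := hp
      simp only [hPdef, Finset.mem_image, Finset.mem_filter, Finset.mem_univ, true_and] at this
      exact this
    have hne : p ≠ s t := by
      intro he
      rw [← hup] at he
      have := hsinj he
      rw [this] at hu
      exact lt_irrefl _ hu
    have h2 : 1 < ((insert (s t) (P (t : ℕ))).filter (fun q => q.2 = (s t).2)).card := by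
      apply Finset.one_lt_card.mpr
      refine ⟨p, ?_, s t, ?_, hne⟩
      · exact Finset.mem_filter.mpr ⟨Finset.mem_insert_of_mem hp, hpe⟩
      · exact Finset.mem_filter.mpr ⟨Finset.mem_insert_self _ _, rfl⟩
    have h3 := hIndepP t ((s t).2)
    omega
  have hstep_inj : ∀ t u : Fin k, (s t).2 = (s u).2 → t = u := by
    intro t u he
    by_contra hne
    rcases lt_or_gt_of_ne hne with h | h
    · have hmem : s t ∈ P (u : ℕ) := by
        simp only [hPdef, Finset.mem_image, Finset.mem_filter, Finset.mem_univ, true_and]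
        exact ⟨t, h, rfl⟩
      exact hfresh u (s t) hmem he
    · have hmem : s u ∈ P (t : ℕ) := by
        simp only [hPdef, Finset.mem_image, Finset.mem_filter, Finset.mem_univ, true_and]
        exact ⟨u, h, rfl⟩
      exact hfresh t (s u) hmem he.symm
  have hSpart : PartitionIndep S := by
    intro j
    apply Finset.card_le_one.mpr
    intro a ha b hb
    obtain ⟨haS, haj⟩ := Finset.mem_filter.mp ha
    obtain ⟨hbS, hbj⟩ := Finset.mem_filter.mp hb
    rw [hS] at haS hbS
    obtain ⟨ta, -, hta⟩ := Finset.mem_image.mp haS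
    obtain ⟨tb, -, htb⟩ := Finset.mem_image.mp hbS
    have : (s ta).2 = (s tb).2 := by rw [hta, htb, haj, hbj]
    rw [← hta, ← htb, hstep_inj ta tb this]
  have hcov : ∀ j : M, ∃ t : Fin k, (s t).2 = j := by
    intro j
    by_contra hno
    push_neg at hno
    have hq : ((i₀, j) : N × M) ∉ S := by
      rw [hS]
      simp only [Finset.mem_image, Finset.mem_univ, true_and, not_exists]
      intro t ht
      exact hno t (by rw [ht])
    apply hSmax (i₀, j) hq
    apply partitionIndep_insert hSpart
    intro p hp hpj
    rw [hS] at hp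
    obtain ⟨t, -, ht⟩ := Finset.mem_image.mp hp
    exact hno t (by rw [ht, hpj])
  choose stp hstp using hcov
  have hδeq : ∀ t : Fin k, δ t =
      v (s t).1 (insert (s t).2 (playerSlice (s t).1 (P (t : ℕ)))) -
        v (s t).1 (playerSlice (s t).1 (P (t : ℕ))) := by
    intro t
    simp only [hδdef]
    have := hmarg (P (t : ℕ)) (s t)
    linarith
  have hδnonneg : ∀ t : Fin k, 0 ≤ δ t := by
    intro t
    rw [hδeq t]
    have := hmono (s t).1 _ _
      (Finset.subset_insert (s t).2 (playerSlice (s t).1 (P (t : ℕ))))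
    linarith
  have hgreedy : ∀ (t : Fin k) (i : N) (j : M), (∀ p ∈ P (t : ℕ), p.2 ≠ j) →
      v i (insert j (playerSlice i (P (t : ℕ)))) - v i (playerSlice i (P (t : ℕ))) ≤ δ t := by
    intro t i j hfr
    have hqnot : ((i, j) : N × M) ∉ prefixSet s t := by
      rw [hPeq t]
      intro hmem
      exact hfr _ hmem rfl
    have hqind : PartitionIndep (insert ((i, j) : N × M) (prefixSet s t)) := by
      rw [hPeq t]
      exact partitionIndep_insert
        (partitionIndep_subset (Finset.subset_insert _ _) (hIndepP t)) i j hfr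
    have h := hgMax t (i, j) hqnot hqind
    rw [hPeq t] at h
    have h2 := hmarg (P (t : ℕ)) (i, j)
    simp only [hδdef]
    simp only at h2
    linarith
  -- telescoping the greedy gains
  have hVtel : ∀ n : ℕ, n ≤ k → V (P n) = V (P 0) +
      ∑ t ∈ Finset.univ.filter (fun t : Fin k => (t : ℕ) < n), δ t := by
    intro n
    induction n with
    | zero =>
      intro _
      have : Finset.univ.filter (fun t : Fin k => (t : ℕ) < 0) = ∅ := by
        apply Finset.filter_eq_empty_iff.mpr
        intro t _
        omega
      rw [this]
      simp
    | succ n ih =>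
      intro hn
      have hnk : n < k := hn
      have h1 : P (n + 1) = insert (s ⟨n, hnk⟩) (P n) := hPsucc n hnk
      have h2 : Finset.univ.filter (fun t : Fin k => (t : ℕ) < n + 1)
          = insert (⟨n, hnk⟩ : Fin k) (Finset.univ.filter (fun t : Fin k => (t : ℕ) < n)) := by
        ext t
        simp only [Finset.mem_filter, Finset.mem_univ, true_and, Finset.mem_insert]
        constructor
        · intro ht
          rcases Nat.lt_succ_iff_lt_or_eq.mp ht with h | h
          · exact Or.inr h
          · exact Or.inl (Fin.ext h)
        · rintro (rfl | ht)
          · exact Nat.lt_succ_self n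
          · exact Nat.lt_succ_of_lt ht
      have hnotmem : (⟨n, hnk⟩ : Fin k) ∉
          Finset.univ.filter (fun t : Fin k => (t : ℕ) < n) := by
        simp
      have h3 : V (insert (s ⟨n, hnk⟩) (P n)) = V (P n) + δ ⟨n, hnk⟩ := by
        simp only [hδdef]
        ring
      rw [h1, h2, Finset.sum_insert hnotmem, h3, ih (le_of_lt hnk)]
      ring
  have hVS : V S = V ∅ + ∑ t : Fin k, δ t := by
    have h := hVtel k le_rfl
    rw [hPk k le_rfl, hP0] at h
    rw [h]
    congr 1
    apply Finset.sum_congr ?_ (fun _ _ => rfl)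
    ext t
    simp [t.isLt]
  have hV0 : ∑ i : N, c i ≤ V ∅ := by
    rw [hV]
    apply Finset.sum_le_sum
    intro i _
    have h1 := (hclose i ∅).1
    rw [hℓ] at h1
    simp only [Finset.sum_empty, add_zero] at h1
    rw [playerSlice_empty]
    exact h1
  -- per-player key inequality
  have hkey : ∀ i : N, (∑ j ∈ T i, l i j) ≤
      α * (∑ t ∈ Finset.univ.filter (fun t : Fin k => (s t).2 ∈ T i), δ t)
        + ε * v i (playerSlice i S) := by
    intro i
    set B : Finset M := playerSlice i S \ T i with hBdef
    set Tn : ℕ → Finset M :=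
      fun n => (T i).filter (fun x => ∃ t : Fin k, (t : ℕ) < n ∧ (s t).2 = x) with hTndef
    have htel : ∀ n : ℕ, v i (B ∪ Tn n) - v i B ≤
        α * ∑ t ∈ Finset.univ.filter
          (fun t : Fin k => (t : ℕ) < n ∧ (s t).2 ∈ T i), δ t := by
      intro n
      induction n with
      | zero =>
        have hT0 : Tn 0 = ∅ := by
          simp only [hTndef]
          apply Finset.filter_eq_empty_iff.mpr
          intro x _
          push_neg
          intro t ht
          omega
        have hf0 : Finset.univ.filter (fun t : Fin k => (t : ℕ) < 0 ∧ (s t).2 ∈ T i) = ∅ := by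
          apply Finset.filter_eq_empty_iff.mpr
          intro t _
          push_neg
          intro h
          omega
        rw [hT0, hf0]
        simp
      | succ n ih =>
        by_cases hnk : n < k
        · have ht₀v : ((⟨n, hnk⟩ : Fin k) : ℕ) = n := rfl
          by_cases hjT : (s ⟨n, hnk⟩).2 ∈ T i
          · have hTsucc : Tn (n + 1) = insert (s ⟨n, hnk⟩).2 (Tn n) := by
              ext x
              simp only [hTndef, Finset.mem_filter, Finset.mem_insert]
              constructor
              · rintro ⟨hxT, t', ht', hxe⟩
                rcases Nat.lt_succ_iff_lt_or_eq.mp ht' with h | h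
                · exact Or.inr ⟨hxT, t', h, hxe⟩
                · have ht'e : t' = (⟨n, hnk⟩ : Fin k) := Fin.ext h
                  left
                  rw [← hxe, ht'e]
              · rintro (rfl | ⟨hxT, t', ht', hxe⟩)
                · exact ⟨hjT, ⟨n, hnk⟩, Nat.lt_succ_self n, rfl⟩
                · exact ⟨hxT, t', Nat.lt_succ_of_lt ht', hxe⟩
            have hjnotTn : (s ⟨n, hnk⟩).2 ∉ Tn n := by
              simp only [hTndef, Finset.mem_filter, not_and]
              rintro - ⟨t', ht', he⟩
              have ht'eq := hstep_inj t' ⟨n, hnk⟩ he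
              rw [ht'eq] at ht'
              simp only [ht₀v] at ht'
              omega
            have hjnotB : (s ⟨n, hnk⟩).2 ∉ B := by
              simp only [hBdef, Finset.mem_sdiff, not_and, not_not]
              intro _
              exact hjT
            have hsliceSub : playerSlice i (P n) ⊆ B ∪ Tn n := by
              intro x hx
              have hxP : (i, x) ∈ P n := mem_playerSlice.mp hx
              have hxS : x ∈ playerSlice i S := mem_playerSlice.mpr (hPsub n hxP)
              by_cases hxT : x ∈ T i
              · apply Finset.mem_union_right
                simp only [hTndef, Finset.mem_filter]
                refine ⟨hxT, ?_⟩
                obtain ⟨t', ht', hte⟩ : ∃ t' : Fin k, (t' : ℕ) < n ∧ s t' = (i, x) := by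
                  have := hxP
                  simp only [hPdef, Finset.mem_image, Finset.mem_filter,
                    Finset.mem_univ, true_and] at this
                  exact this
                exact ⟨t', ht', by rw [hte]⟩
              · exact Finset.mem_union_left _ (Finset.mem_sdiff.mpr ⟨hxS, hxT⟩)
            have hjnotBT : (s ⟨n, hnk⟩).2 ∉ B ∪ Tn n := by
              rw [Finset.mem_union]
              rintro (h | h)
              · exact hjnotB h
              · exact hjnotTn h
            have hsubap := hsub i (playerSlice i (P n)) (B ∪ Tn n) hsliceSub
              (s ⟨n, hnk⟩).2 hjnotBT
            have hgr : v i (insert (s ⟨n, hnk⟩).2 (playerSlice i (P n))) -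
                v i (playerSlice i (P n)) ≤ δ ⟨n, hnk⟩ :=
              hgreedy ⟨n, hnk⟩ i (s ⟨n, hnk⟩).2 (hfresh ⟨n, hnk⟩)
            have hαm : α * (v i (insert (s ⟨n, hnk⟩).2 (playerSlice i (P n))) -
                v i (playerSlice i (P n))) ≤ α * δ ⟨n, hnk⟩ :=
              mul_le_mul_of_nonneg_left hgr (by linarith)
            have hunion : B ∪ Tn (n + 1) = insert (s ⟨n, hnk⟩).2 (B ∪ Tn n) := by
              rw [hTsucc, Finset.union_insert]
            have hsum : Finset.univ.filter
                (fun t : Fin k => (t : ℕ) < n + 1 ∧ (s t).2 ∈ T i)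
                = insert (⟨n, hnk⟩ : Fin k) (Finset.univ.filter
                  (fun t : Fin k => (t : ℕ) < n ∧ (s t).2 ∈ T i)) := by
              ext t'
              simp only [Finset.mem_filter, Finset.mem_univ, true_and, Finset.mem_insert]
              constructor
              · rintro ⟨ht', hT'⟩
                rcases Nat.lt_succ_iff_lt_or_eq.mp ht' with h | h
                · exact Or.inr ⟨h, hT'⟩
                · exact Or.inl (Fin.ext h)
              · rintro (rfl | ⟨h1, h2⟩)
                · exact ⟨Nat.lt_succ_self n, hjT⟩
                · exact ⟨Nat.lt_succ_of_lt h1, h2⟩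
            have ht₀notin : (⟨n, hnk⟩ : Fin k) ∉ Finset.univ.filter
                (fun t : Fin k => (t : ℕ) < n ∧ (s t).2 ∈ T i) := by
              simp only [Finset.mem_filter, Finset.mem_univ, true_and, not_and]
              intro h
              omega
            rw [hsum, Finset.sum_insert ht₀notin, hunion]
            have hmain : v i (insert (s ⟨n, hnk⟩).2 (B ∪ Tn n)) - v i (B ∪ Tn n)
                ≤ α * δ ⟨n, hnk⟩ := by linarith
            have hexp : α * (δ ⟨n, hnk⟩ + ∑ t ∈ Finset.univ.filter
                (fun t : Fin k => (t : ℕ) < n ∧ (s t).2 ∈ T i), δ t)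
                = α * δ ⟨n, hnk⟩ + α * ∑ t ∈ Finset.univ.filter
                  (fun t : Fin k => (t : ℕ) < n ∧ (s t).2 ∈ T i), δ t := by ring
            rw [hexp]
            linarith
          · -- item not in T i : nothing changes
            have hTeq : Tn (n + 1) = Tn n := by
              ext x
              simp only [hTndef, Finset.mem_filter]
              constructor
              · rintro ⟨hxT, t', ht', he⟩
                refine ⟨hxT, t', ?_, he⟩
                rcases Nat.lt_succ_iff_lt_or_eq.mp ht' with h | h
                · exact h
                · exfalso
                  have : t' = (⟨n, hnk⟩ : Fin k) := Fin.ext h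
                  rw [this] at he
                  rw [he] at hjT
                  exact hjT hxT
              · rintro ⟨hxT, t', ht', he⟩
                exact ⟨hxT, t', Nat.lt_succ_of_lt ht', he⟩
            have hseq : Finset.univ.filter
                (fun t : Fin k => (t : ℕ) < n + 1 ∧ (s t).2 ∈ T i)
                = Finset.univ.filter (fun t : Fin k => (t : ℕ) < n ∧ (s t).2 ∈ T i) := by
              ext t'
              simp only [Finset.mem_filter, Finset.mem_univ, true_and]
              constructor
              · rintro ⟨ht', hT'⟩
                refine ⟨?_, hT'⟩
                rcases Nat.lt_succ_iff_lt_or_eq.mp ht' with h | h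
                · exact h
                · exfalso
                  have : t' = (⟨n, hnk⟩ : Fin k) := Fin.ext h
                  rw [this] at hT'
                  exact hjT hT'
              · rintro ⟨ht', hT'⟩
                exact ⟨Nat.lt_succ_of_lt ht', hT'⟩
            rw [hTeq, hseq]
            exact ih
        · -- n ≥ k : nothing changes
          have hkn : k ≤ n := Nat.le_of_not_lt hnk
          have hTeq : Tn (n + 1) = Tn n := by
            ext x
            simp only [hTndef, Finset.mem_filter]
            constructor
            · rintro ⟨hxT, t', -, he⟩
              exact ⟨hxT, t', lt_of_lt_of_le t'.isLt hkn, he⟩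
            · rintro ⟨hxT, t', ht', he⟩
              exact ⟨hxT, t', Nat.lt_succ_of_lt ht', he⟩
          have hseq : Finset.univ.filter
              (fun t : Fin k => (t : ℕ) < n + 1 ∧ (s t).2 ∈ T i)
              = Finset.univ.filter (fun t : Fin k => (t : ℕ) < n ∧ (s t).2 ∈ T i) := by
            ext t'
            simp only [Finset.mem_filter, Finset.mem_univ, true_and]
            constructor
            · rintro ⟨-, hT'⟩
              exact ⟨lt_of_lt_of_le t'.isLt hkn, hT'⟩
            · rintro ⟨ht', hT'⟩
              exact ⟨Nat.lt_succ_of_lt ht', hT'⟩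
          rw [hTeq, hseq]
          exact ih
    have hTnk : Tn k = T i := by
      ext x
      simp only [hTndef, Finset.mem_filter]
      constructor
      · rintro ⟨h, -⟩
        exact h
      · intro hx
        exact ⟨hx, stp x, (stp x).isLt, hstp x⟩
    have hfil : Finset.univ.filter (fun t : Fin k => (t : ℕ) < k ∧ (s t).2 ∈ T i)
        = Finset.univ.filter (fun t : Fin k => (s t).2 ∈ T i) := by
      ext t
      simp [t.isLt]
    have hBT := htel k
    rw [hTnk, hfil] at hBT
    have hdisj : Disjoint B (T i) := Finset.sdiff_disjoint
    have h1 : ℓ i (B ∪ T i) ≤ v i (B ∪ T i) := (hclose i _).1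
    have h2 : v i B ≤ (1 + ε) * ℓ i B := (hclose i _).2
    have h3 : ℓ i (B ∪ T i) = c i + ((∑ j ∈ B, l i j) + (∑ j ∈ T i, l i j)) := by
      rw [hℓ, Finset.sum_union hdisj]
    have h4 : ℓ i B = c i + ∑ j ∈ B, l i j := hℓ i B
    have h5 : ℓ i B ≤ v i (playerSlice i S) := by
      have hsubB : B ⊆ playerSlice i S := Finset.sdiff_subset
      have hs : ℓ i B ≤ ℓ i (playerSlice i S) := by
        rw [hℓ, hℓ]
        have := Finset.sum_le_sum_of_subset_of_nonneg hsubB (fun j _ _ => hl i j)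
        linarith
      exact le_trans hs (hclose i _).1
    have h6 : ε * ℓ i B ≤ ε * v i (playerSlice i S) := mul_le_mul_of_nonneg_left h5 hε
    have hexp2 : (1 + ε) * ℓ i B = ℓ i B + ε * ℓ i B := by ring
    rw [hexp2] at h2
    linarith
  -- summing the per-step gains over players
  have hQle : (∑ i : N, ∑ t ∈ Finset.univ.filter
      (fun t : Fin k => (s t).2 ∈ T i), δ t) ≤ ∑ t : Fin k, δ t := by
    have hrw : ∀ i : N, (∑ t ∈ Finset.univ.filter
        (fun t : Fin k => (s t).2 ∈ T i), δ t)
        = ∑ t : Fin k, if (s t).2 ∈ T i then δ t else 0 :=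
      fun i => Finset.sum_filter _ _
    rw [Finset.sum_congr rfl (fun i _ => hrw i), Finset.sum_comm]
    apply Finset.sum_le_sum
    intro t _
    by_cases hex : ∃ i : N, (s t).2 ∈ T i
    · obtain ⟨i₁, hi₁⟩ := hex
      have heq : ∀ i ∈ (Finset.univ : Finset N),
          (if (s t).2 ∈ T i then δ t else 0) = if i = i₁ then δ t else 0 := by
        intro i _
        by_cases h : (s t).2 ∈ T i
        · have hii : i = i₁ := by
            by_contra hne
            exact (Finset.disjoint_left.mp (hT i i₁ hne) h) hi₁
          rw [if_pos h, if_pos hii]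
        · have hii : i ≠ i₁ := fun he => h (he ▸ hi₁)
          rw [if_neg h, if_neg hii]
      rw [Finset.sum_congr rfl heq, Finset.sum_ite_eq' Finset.univ i₁ (fun _ => δ t)]
      simp
    · push_neg at hex
      rw [Finset.sum_congr rfl (fun i _ => if_neg (hex i))]
      simpa using hδnonneg t
  -- assemble
  set W : ℝ := ∑ i : N, v i (playerSlice i S) with hWdef
  have hWV : V S = W := hV S
  have hW0 : (0 : ℝ) ≤ W := Finset.sum_nonneg fun i _ => hv i _
  have hOPT0 : (0 : ℝ) ≤ ∑ i : N, v i (T i) := Finset.sum_nonneg fun i _ => hv i _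
  have hC0 : (0 : ℝ) ≤ ∑ i : N, c i := Finset.sum_nonneg fun i _ => hc i
  have hD : ∑ t : Fin k, δ t ≤ W - ∑ i : N, c i := by linarith [hVS, hV0, hWV]
  have hTL : (∑ i : N, ∑ j ∈ T i, l i j) ≤ α * (W - ∑ i : N, c i) + ε * W := by
    have step1 : (∑ i : N, ∑ j ∈ T i, l i j) ≤
        ∑ i : N, (α * (∑ t ∈ Finset.univ.filter
          (fun t : Fin k => (s t).2 ∈ T i), δ t) + ε * v i (playerSlice i S)) :=
      Finset.sum_le_sum fun i _ => hkey i
    have step2 : (∑ i : N, (α * (∑ t ∈ Finset.univ.filter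
        (fun t : Fin k => (s t).2 ∈ T i), δ t) + ε * v i (playerSlice i S)))
        = α * (∑ i : N, ∑ t ∈ Finset.univ.filter
          (fun t : Fin k => (s t).2 ∈ T i), δ t) + ε * W := by
      rw [Finset.sum_add_distrib, ← Finset.mul_sum, ← Finset.mul_sum, hWdef]
    have step3 : α * (∑ i : N, ∑ t ∈ Finset.univ.filter
        (fun t : Fin k => (s t).2 ∈ T i), δ t) ≤ α * ∑ t : Fin k, δ t :=
      mul_le_mul_of_nonneg_left hQle (by linarith)
    have step4 : α * (∑ t : Fin k, δ t) ≤ α * (W - ∑ i : N, c i) :=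
      mul_le_mul_of_nonneg_left hD (by linarith)
    linarith
  have hOPTle : (∑ i : N, v i (T i)) ≤
      (1 + ε) * ((∑ i : N, c i) + ∑ i : N, ∑ j ∈ T i, l i j) := by
    have hterm : ∀ i : N, v i (T i) ≤ (1 + ε) * (c i + ∑ j ∈ T i, l i j) := by
      intro i
      have := (hclose i (T i)).2
      rwa [hℓ] at this
    calc (∑ i : N, v i (T i)) ≤ ∑ i : N, (1 + ε) * (c i + ∑ j ∈ T i, l i j) :=
          Finset.sum_le_sum fun i _ => hterm i
      _ = (1 + ε) * ((∑ i : N, c i) + ∑ i : N, ∑ j ∈ T i, l i j) := by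
          rw [← Finset.mul_sum, Finset.sum_add_distrib]
  have hfinal : (∑ i : N, v i (T i)) ≤ (1 + ε) * (α * W + ε * W) := by
    have hca : (∑ i : N, c i) ≤ α * (∑ i : N, c i) := le_mul_of_one_le_left hC0 hα
    have hexp3 : α * (W - ∑ i : N, c i) = α * W - α * (∑ i : N, c i) := by ring
    have s1 : (∑ i : N, c i) + (∑ i : N, ∑ j ∈ T i, l i j) ≤ α * W + ε * W := by
      linarith [hTL]
    have s2 := mul_le_mul_of_nonneg_left s1 (by linarith : (0:ℝ) ≤ 1 + ε)
    linarith [hOPTle]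
  rcases le_or_gt (1 - 3 * ε) 0 with h3 | h3
  · have hco : (1 - 3 * ε) / α ≤ 0 := div_nonpos_iff.mpr (Or.inr ⟨h3, by linarith⟩)
    have := mul_nonpos_of_nonpos_of_nonneg hco hOPT0
    linarith
  · have hαpos : (0 : ℝ) < α := by linarith
    rw [ge_iff_le, div_mul_eq_mul_div, div_le_iff₀ hαpos]
    have h4 : (1 - 3 * ε) * (∑ i : N, v i (T i)) ≤
        (1 - 3 * ε) * ((1 + ε) * (α * W + ε * W)) :=
      mul_le_mul_of_nonneg_left hfinal (le_of_lt h3)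
    nlinarith [mul_nonneg hε hW0, mul_nonneg (mul_nonneg hε hε) hW0,
      mul_nonneg (mul_nonneg hε hW0) (by linarith : (0:ℝ) ≤ α - 1),
      mul_nonneg (mul_nonneg (mul_nonneg hε hε) hW0) (by linarith : (0:ℝ) ≤ α - 1),
      mul_nonneg hε (mul_nonneg (mul_nonneg hε hε) hW0)]
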